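/- arXiv:1907.07650 — 4 statements merged into one kernel-verified Lean document; each statement's English description precedes it below -/
import Mathlib

section
/- A tree T is nonsingular (its adjacency matrix has trivial null space) if and only if T has a perfect matching. -/
open SimpleGraph Matrix

attribute [local instance] Classical.propDecidable

noncomputable section

variable {V : Type*}

/-- A graph is singular if its adjacency matrix (over ℝ) has nontrivial kernel. -/
def IsSingular [Fintype V] (G : SimpleGraph V) : Prop :=
  ∃ x : V → ℝ, x ≠ 0 ∧ G.adjMatrix ℝ *ᵥ x = 0

/-- The support of the null space of the adjacency matrix. -/
def nullSupp [Fintype V] (G : SimpleGraph V) : Set V :=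
  {v | ∃ x : V → ℝ, G.adjMatrix ℝ *ᵥ x = 0 ∧ x v ≠ 0}

/-- The core: all neighbours of supported vertices. -/
def core [Fintype V] (G : SimpleGraph V) : Set V :=
  ⋃ v ∈ nullSupp G, G.neighborSet v

/-- Vertex set of the N-forest: complement of the closed neighbourhood of the support. -/
def fnVerts [Fintype V] (G : SimpleGraph V) : Set V :=
  (nullSupp G ∪ core G)ᶜ

/-- A matching as a set of pairwise disjoint edges of `G`. -/
def IsMatchingSet (G : SimpleGraph V) (M : Set (Sym2 V)) : Prop :=
  M ⊆ G.edgeSet ∧ M.Pairwise fun e f => ∀ v : V, ¬(v ∈ e ∧ v ∈ f)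

/-- `M` saturates `v`. -/
def Saturates (M : Set (Sym2 V)) (v : V) : Prop := ∃ e ∈ M, v ∈ e

/-- A perfect matching saturates every vertex. -/
def IsPerfectMatchingSet (G : SimpleGraph V) (M : Set (Sym2 V)) : Prop :=
  IsMatchingSet G M ∧ ∀ v : V, Saturates M v

/-- Matching number. -/
def matchNum [Fintype V] (G : SimpleGraph V) : ℕ :=
  sSup {n | ∃ M : Set (Sym2 V), IsMatchingSet G M ∧ M.ncard = n}

/-- Maximum matchings. -/
def IsMaxMatching [Fintype V] (G : SimpleGraph V) (M : Set (Sym2 V)) : Prop :=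
  IsMatchingSet G M ∧ M.ncard = matchNum G

/-- Independent set of vertices. -/
def IsIndepSet (G : SimpleGraph V) (I : Set V) : Prop :=
  I.Pairwise fun a b => ¬ G.Adj a b

/-- Independence number. -/
def indepNum [Fintype V] (G : SimpleGraph V) : ℕ :=
  sSup {n | ∃ I : Set V, _root_.IsIndepSet G I ∧ I.ncard = n}

/-- Maximum independent sets. -/
def IsMaxIndep [Fintype V] (G : SimpleGraph V) (I : Set V) : Prop :=
  _root_.IsIndepSet G I ∧ I.ncard = _root_.indepNum G

/-- The graph `G` with all vertices in `S` deleted (kept as isolated vertices). -/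
def avoid (G : SimpleGraph V) (S : Set V) : SimpleGraph V where
  Adj a b := G.Adj a b ∧ a ∉ S ∧ b ∉ S
  symm := ⟨fun a b h => ⟨h.1.symm, h.2.2, h.2.1⟩⟩
  loopless := ⟨fun a h => G.loopless.irrefl a h.1⟩

/-- `G` is unicyclic: connected with as many edges as vertices. -/
def IsUnicyclic [Fintype V] (G : SimpleGraph V) : Prop :=
  G.Connected ∧ G.edgeFinset.card = Fintype.card V

/-- `C` is the vertex set of the (unique) cycle of `G`:
the induced subgraph on `C` is connected and 2-regular. -/
def IsCycleVerts [Fintype V] (G : SimpleGraph V) (C : Set V) : Prop :=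
  C.Nonempty ∧ (G.induce C).Connected ∧ ∀ v : C, (G.induce C).degree v = 2

/-- Vertices of the pendant tree of `G` at the cycle vertex `v`: all vertices
reachable from `v` after deleting the other cycle vertices. -/
def pendantVerts (G : SimpleGraph V) (C : Set V) (v : V) : Set V :=
  {u | (avoid G (C \ {v})).Reachable v u}

lemma mem_pendantVerts_self (G : SimpleGraph V) (C : Set V) (v : V) :
    v ∈ pendantVerts G C v := Reachable.refl v

/-- The pendant tree of `G` at `v` (as an induced subgraph). -/
def pendantTree (G : SimpleGraph V) (C : Set V) (v : V) :
    SimpleGraph (pendantVerts G C v) := G.induce (pendantVerts G C v)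

/-- The rest of the graph, `G − G{v}`. -/
def pendantRest (G : SimpleGraph V) (C : Set V) (v : V) :
    SimpleGraph ((pendantVerts G C v)ᶜ : Set V) := G.induce (pendantVerts G C v)ᶜ

/-- `v` is matched in a graph `H`: every maximum matching of `H` saturates `v`. -/
def MatchedIn {W : Type*} [Fintype W] (H : SimpleGraph W) (w : W) : Prop :=
  ∀ M : Set (Sym2 W), IsMaxMatching H M → Saturates M w

/-- A unicyclic graph is of Type I if some cycle vertex is matched in its pendant tree. -/
def TypeI [Fintype V] (G : SimpleGraph V) (C : Set V) : Prop :=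
  ∃ v ∈ C, MatchedIn (pendantTree G C v) ⟨v, mem_pendantVerts_self G C v⟩

/-- Type II: every cycle vertex is missed by some maximum matching of its pendant tree. -/
def TypeII [Fintype V] (G : SimpleGraph V) (C : Set V) : Prop :=
  ∀ v ∈ C, ¬ MatchedIn (pendantTree G C v) ⟨v, mem_pendantVerts_self G C v⟩

end

lemma exists_leaf {V : Type*} [Fintype V] (G : SimpleGraph V) (hA : G.IsAcyclic)
    {a b : V} (h : G.Adj a b) :
    ∃ u v, G.Adj u v ∧ ∀ w, G.Adj u w → w = v := by
  classical
  set L : Set ℕ := {n | ∃ (a b : V) (p : G.Walk a b), p.IsPath ∧ p.length = n} with hL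
  have hne : L.Nonempty := ⟨1, a, b, Walk.cons h Walk.nil, by simp [h.ne], by simp⟩
  have hbdd : BddAbove L := by
    refine ⟨Fintype.card V, fun n hn => ?_⟩
    obtain ⟨a, b, p, hp, rfl⟩ := hn
    exact hp.length_lt.le
  obtain ⟨u, c, p, hp, hlen⟩ := Nat.sSup_mem hne hbdd
  have h1 : 1 ≤ sSup L := le_csSup hbdd hne.choose_spec |>.trans (le_refl _) |> fun _ => le_csSup hbdd ⟨a, b, Walk.cons h Walk.nil, by simp [h.ne], by simp⟩
  have hlen1 : 1 ≤ p.length := hlen ▸ h1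
  have hadj : G.Adj u (p.getVert 1) := by
    simpa using p.adj_getVert_succ (by omega : 0 < p.length)
  refine ⟨u, p.getVert 1, hadj, fun w hw => ?_⟩
  -- w must be in p.support
  have hwsupp : w ∈ p.support := by
    by_contra hws
    have hq : (Walk.cons hw.symm p).IsPath := by
      rw [Walk.cons_isPath_iff]; exact ⟨hp, hws⟩
    have : p.length + 1 ∈ L := ⟨w, c, Walk.cons hw.symm p, hq, by simp⟩
    have := le_csSup hbdd this
    omega
  -- takeUntil is a path from u to w; so is the single edge; uniqueness
  have ht : (p.takeUntil w hwsupp).IsPath := hp.takeUntil hwsupp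
  have he : (Walk.cons hw Walk.nil : G.Walk u w).IsPath := by simp [hw.ne]
  have := hA.path_unique ⟨p.takeUntil w hwsupp, ht⟩ ⟨Walk.cons hw Walk.nil, he⟩
  have htw : p.takeUntil w hwsupp = Walk.cons hw Walk.nil := congrArg Subtype.val this
  have hspec := p.take_spec hwsupp
  have : p.getVert 1 = w := by
    conv_lhs => rw [← hspec]
    rw [htw]
    simp [Walk.getVert_cons_succ]
  exact this.symm
open Finset in
lemma ker_transfer {V : Type*} [Fintype V] (G : SimpleGraph V) {u v : V}
    (huv : G.Adj u v) (hleaf : ∀ w, G.Adj u w → w = v) (S : Set V) (hu : u ∉ S) :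
    (∃ x : V → ℝ, x ≠ 0 ∧ (∀ s ∈ S, x s = 0) ∧ G.adjMatrix ℝ *ᵥ x = 0) ↔
    (∃ y : V → ℝ, y ≠ 0 ∧ (∀ s ∈ S ∪ {u, v}, y s = 0) ∧
      (avoid G {u, v}).adjMatrix ℝ *ᵥ y = 0) := by
  classical
  have hne : u ≠ v := huv.ne
  have nbr_u : G.neighborFinset u = {v} := by
    ext w
    simp only [mem_neighborFinset, Finset.mem_singleton]
    exact ⟨fun h => hleaf w h, fun h => h ▸ huv⟩
  have hadj' : ∀ a b, (avoid G {u, v}).Adj a b ↔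
      G.Adj a b ∧ a ∉ ({u, v} : Set V) ∧ b ∉ ({u, v} : Set V) := fun a b => Iff.rfl
  have hnadju : ∀ w, w ≠ v → ¬ G.Adj w u := by
    intro w hwv h
    exact hwv (hleaf w h.symm)
  constructor
  · rintro ⟨x, hx0, hxS, hker⟩
    have xv : x v = 0 := by
      have := congrFun hker u
      rwa [adjMatrix_mulVec_apply, nbr_u, Finset.sum_singleton, Pi.zero_apply] at this
    refine ⟨fun w => if w = u ∨ w = v then 0 else x w, ?_, ?_, ?_⟩
    · intro hy
      have hzero : ∀ w, w ≠ u → w ≠ v → x w = 0 := by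
        intro w h1 h2
        have := congrFun hy w
        simpa [h1, h2] using this
      have hxu : x u = 0 := by
        have := congrFun hker v
        rw [adjMatrix_mulVec_apply, Pi.zero_apply] at this
        rw [Finset.sum_eq_single_of_mem u (by rwa [mem_neighborFinset, adj_comm])] at this
        · exact this
        · intro w hw hwu
          rw [mem_neighborFinset] at hw
          exact hzero w hwu hw.ne'
      apply hx0
      funext w
      by_cases h1 : w = u
      · simpa [h1] using hxu
      by_cases h2 : w = v
      · simpa [h2] using xv
      · simpa using hzero w h1 h2
    · intro s hs
      rcases hs with hs | hs
      · by_cases h1 : s = u ∨ s = v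
        · simp [h1]
        · simpa [h1] using hxS s hs
      · simp only [Set.mem_insert_iff, Set.mem_singleton_iff] at hs
        simp [hs]
    · funext w
      rw [Pi.zero_apply, mulVec, dotProduct]
      by_cases hw : w = u ∨ w = v
      · apply Finset.sum_eq_zero
        intro w' _
        have : ¬ (avoid G {u, v}).Adj w w' := by
          rw [hadj']
          rintro ⟨-, h, -⟩
          exact h (by simpa using hw)
        simp [this]
      · push_neg at hw
        have hG : ∑ w', G.adjMatrix ℝ w w' * x w' = 0 := by
          have := congrFun hker w
          rwa [mulVec, dotProduct, Pi.zero_apply] at this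
        refine Eq.trans (Finset.sum_congr rfl ?_) hG
        intro w' _
        by_cases h1 : w' = u
        · have hl : ¬ (avoid G {u, v}).Adj w w' := by
            rw [hadj']; rintro ⟨-, -, h⟩; exact h (by simp [h1])
          have hr : ¬ G.Adj w w' := h1 ▸ hnadju w hw.2
          simp [hl, hr]
        by_cases h2 : w' = v
        · rw [show (if w' = u ∨ w' = v then (0:ℝ) else x w') = 0 from by simp [h2],
            show x w' = 0 from h2 ▸ xv, mul_zero, mul_zero]
        · have : (avoid G {u, v}).Adj w w' ↔ G.Adj w w' := by
            rw [hadj']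
            simp [hw.1, hw.2, h1, h2]
          simp only [adjMatrix_apply, h1, h2, or_self, if_false]
          rw [this]
  · rintro ⟨y, hy0, hyS, hker⟩
    have yu : y u = 0 := hyS u (Or.inr (by simp))
    have yv : y v = 0 := hyS v (Or.inr (by simp))
    set c : ℝ := -(∑ w ∈ G.neighborFinset v, y w) with hc
    refine ⟨Function.update y u c, ?_, ?_, ?_⟩
    · intro hx
      apply hy0
      funext w
      by_cases h1 : w = u
      · simp [h1, yu]
      · have := congrFun hx w
        rwa [Function.update_of_ne h1, Pi.zero_apply] at this
    · intro s hs
      have hsu : s ≠ u := fun h => hu (h ▸ hs)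
      rw [Function.update_of_ne hsu]
      exact hyS s (Or.inl hs)
    · funext w
      rw [Pi.zero_apply]
      by_cases hwu : w = u
      · subst hwu
        rw [adjMatrix_mulVec_apply, nbr_u, Finset.sum_singleton,
          Function.update_of_ne hne.symm]
        exact yv
      by_cases hwv : w = v
      · subst hwv
        have humem : u ∈ G.neighborFinset w := by
          rw [mem_neighborFinset]; exact huv.symm
        rw [adjMatrix_mulVec_apply, Finset.sum_update_of_mem humem]
        have : ∑ x ∈ G.neighborFinset w \ {u}, y x = ∑ x ∈ G.neighborFinset w, y x := by
          rw [Finset.sum_eq_sum_sdiff_singleton_add humem y, yu, add_zero]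
        rw [this, hc]
        ring
      · rw [mulVec, dotProduct]
        have hG : ∑ w', (avoid G {u, v}).adjMatrix ℝ w w' * y w' = 0 := by
          have := congrFun hker w
          rwa [mulVec, dotProduct, Pi.zero_apply] at this
        refine Eq.trans (Finset.sum_congr rfl ?_) hG
        intro w' _
        by_cases h1 : w' = u
        · have hl : ¬ G.Adj w w' := h1 ▸ hnadju w hwv
          have hr : ¬ (avoid G {u, v}).Adj w w' := by
            rw [hadj']; rintro ⟨-, -, h⟩; exact h (by simp [h1])
          simp [hl, hr]
        by_cases h2 : w' = v
        · have : Function.update y u c w' = 0 := by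
            rw [Function.update_of_ne h1, h2]; exact yv
          have hr : ¬ (avoid G {u, v}).Adj w w' := by
            rw [hadj']; rintro ⟨-, -, h⟩; exact h (by simp [h2])
          simp [this, hr]
        · have hiff : (avoid G {u, v}).Adj w w' ↔ G.Adj w w' := by
            rw [hadj']
            simp [hwu, hwv, h1, h2]
          rw [Function.update_of_ne h1]
          simp only [adjMatrix_apply]
          rw [hiff]
lemma match_transfer {V : Type*} [Fintype V] (G : SimpleGraph V) {u v : V}
    (huv : G.Adj u v) (hleaf : ∀ w, G.Adj u w → w = v) (S : Set V) (hu : u ∉ S) :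
    (∃ M : Set (Sym2 V), IsMatchingSet G M ∧ ∀ w ∉ S, Saturates M w) ↔
    (∃ M : Set (Sym2 V), IsMatchingSet (avoid G {u, v}) M ∧
      ∀ w ∉ S ∪ ({u, v} : Set V), Saturates M w) := by
  classical
  constructor
  · rintro ⟨M, ⟨hsub, hpair⟩, hsat⟩
    obtain ⟨e, heM, hue⟩ := hsat u hu
    have he : e = s(u, v) := by
      induction e with
      | h a b =>
        have hadj : G.Adj a b := (G.mem_edgeSet).mp (hsub heM)
        rcases Sym2.mem_iff.mp hue with h | h
        · subst h
          rw [hleaf b hadj]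
        · subst h
          rw [hleaf a hadj.symm, Sym2.eq_swap]
    subst he
    refine ⟨M \ {s(u, v)}, ⟨?_, hpair.mono Set.diff_subset⟩, ?_⟩
    · rintro e ⟨heM', hne⟩
      induction e with
      | h a b =>
        have hadj : G.Adj a b := (G.mem_edgeSet).mp (hsub heM')
        have hne' : s(a, b) ≠ s(u, v) := by simpa using hne
        have hnot : ∀ c : V, c ∈ s(a, b) → c ∉ s(u, v) := by
          intro c hc1 hc2
          exact hpair heM' heM hne' c ⟨hc1, hc2⟩
        refine (avoid G {u, v}).mem_edgeSet.mpr ⟨hadj, ?_, ?_⟩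
        · intro h
          exact hnot a (by simp) (by simpa using h)
        · intro h
          exact hnot b (by simp) (by simpa using h)
    · intro w hw
      simp only [Set.mem_union, Set.mem_insert_iff, Set.mem_singleton_iff, not_or] at hw
      obtain ⟨e, heM, hwe⟩ := hsat w hw.1
      refine ⟨e, ⟨heM, ?_⟩, hwe⟩
      intro h
      simp only [Set.mem_singleton_iff] at h
      subst h
      rcases Sym2.mem_iff.mp hwe with h | h
      · exact hw.2.1 h
      · exact hw.2.2 h
  · rintro ⟨M, ⟨hsub, hpair⟩, hsat⟩
    have hdisj : ∀ e ∈ M, ∀ c : V, ¬(c ∈ e ∧ c ∈ s(u, v)) := by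
      intro e heM c ⟨hc1, hc2⟩
      have := hsub heM
      induction e with
      | h a b =>
        obtain ⟨-, ha, hb⟩ := (avoid G {u, v}).mem_edgeSet.mp this
        rcases Sym2.mem_iff.mp hc1 with h | h <;> subst h
        · exact ha (by simpa using Sym2.mem_iff.mp hc2)
        · exact hb (by simpa using Sym2.mem_iff.mp hc2)
    refine ⟨insert s(u, v) M, ⟨?_, ?_⟩, ?_⟩
    · rintro e (rfl | heM)
      · exact G.mem_edgeSet.mpr huv
      · have := hsub heM
        induction e with
        | h a b => exact G.mem_edgeSet.mpr ((avoid G {u, v}).mem_edgeSet.mp this).1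
    · have hsym : Symmetric (fun e f : Sym2 V => ∀ c : V, ¬(c ∈ e ∧ c ∈ f)) :=
        fun e f h c hc => h c ⟨hc.2, hc.1⟩
      rw [@Set.pairwise_insert_of_symm _ _ _ _ ⟨hsym⟩]
      exact ⟨hpair, fun e heM _ c hc => hdisj e heM c ⟨hc.2, hc.1⟩⟩
    · intro w hw
      by_cases hwu : w = u
      · exact ⟨s(u, v), Set.mem_insert _ _, by simp [hwu]⟩
      by_cases hwv : w = v
      · exact ⟨s(u, v), Set.mem_insert _ _, by simp [hwv]⟩
      · obtain ⟨e, heM, hwe⟩ := hsat w (by simp [hw, hwu, hwv])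
        exact ⟨e, Set.mem_insert_of_mem _ heM, hwe⟩
lemma key_induction {V : Type*} [Fintype V] :
    ∀ (n : ℕ) (G : SimpleGraph V) (S : Set V), Sᶜ.ncard = n → G.IsAcyclic →
      (∀ s ∈ S, ∀ w, ¬ G.Adj s w) →
      ((¬ ∃ x : V → ℝ, x ≠ 0 ∧ (∀ s ∈ S, x s = 0) ∧ G.adjMatrix ℝ *ᵥ x = 0) ↔
        ∃ M : Set (Sym2 V), IsMatchingSet G M ∧ ∀ w ∉ S, Saturates M w) := by
  classical
  intro n
  induction n using Nat.strong_induction_on with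
  | _ n IH =>
  intro G S hcard hacy hiso
  by_cases hE : ∃ a b, G.Adj a b
  · obtain ⟨a, b, hab⟩ := hE
    obtain ⟨u, v, huv, hleaf⟩ := exists_leaf G hacy hab
    have hu : u ∉ S := fun h => hiso u h v huv
    have hv : v ∉ S := fun h => hiso v h u huv.symm
    have hle : avoid G {u, v} ≤ G := fun a b h => h.1
    have hacy' : (avoid G {u, v}).IsAcyclic := by
      intro w c hc
      exact hacy (c.mapLe hle) ((Walk.mapLe_isCycle hle).mpr hc)
    have hiso' : ∀ s ∈ S ∪ ({u, v} : Set V), ∀ w, ¬ (avoid G {u, v}).Adj s w := by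
      rintro s hs w ⟨hadj, hns, -⟩
      rcases hs with hs | hs
      · exact hiso s hs w hadj
      · exact hns hs
    have hsubc : ({u, v} : Set V) ⊆ Sᶜ := by
      intro x hx
      rcases hx with rfl | hx
      · exact hu
      · rw [Set.mem_singleton_iff] at hx
        subst hx
        exact hv
    have hcompl : (S ∪ ({u, v} : Set V))ᶜ = Sᶜ \ {u, v} := by
      rw [Set.compl_union, Set.diff_eq]
    have hcard2 : ({u, v} : Set V).ncard = 2 := Set.ncard_pair huv.ne
    have hcard' : ((S ∪ ({u, v} : Set V))ᶜ).ncard = n - 2 := by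
      rw [hcompl, Set.ncard_diff hsubc, hcard2, hcard]
    have hpos : 0 < n := by
      rw [← hcard]
      rw [Set.ncard_pos (Set.toFinite _)]
      exact ⟨u, hu⟩
    have hIH := IH (n - 2) (by omega) (avoid G {u, v}) (S ∪ {u, v}) hcard' hacy' hiso'
    rw [not_congr (ker_transfer G huv hleaf S hu), hIH,
      ← match_transfer G huv hleaf S hu]
  · push_neg at hE
    by_cases hS : ∀ w, w ∈ S
    · apply iff_of_true
      · rintro ⟨x, hx0, hxS, -⟩
        exact hx0 (funext fun w => hxS w (hS w))
      · exact ⟨∅, ⟨Set.empty_subset _, Set.pairwise_empty _⟩,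
          fun w hw => absurd (hS w) hw⟩
    · push_neg at hS
      obtain ⟨w₀, hw₀⟩ := hS
      apply iff_of_false
      · rw [not_not]
        refine ⟨fun z => if z = w₀ then 1 else 0, ?_, ?_, ?_⟩
        · intro h
          have := congrFun h w₀
          simp at this
        · intro s hs
          have : s ≠ w₀ := fun h => hw₀ (h ▸ hs)
          simp [this]
        · funext z
          rw [adjMatrix_mulVec_apply, Pi.zero_apply]
          apply Finset.sum_eq_zero
          intro y hy
          exact absurd ((G.mem_neighborFinset z y).mp hy) (hE z y)
      · rintro ⟨M, ⟨hsub, -⟩, hsat⟩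
        obtain ⟨e, heM, -⟩ := hsat w₀ hw₀
        have := hsub heM
        induction e with
        | h a b => exact hE a b (G.mem_edgeSet.mp this)
theorem tree_nonsingular_iff_perfect_matching {V : Type*} [Fintype V]
    (G : SimpleGraph V) (hT : G.IsTree) :
    ¬ IsSingular G ↔ ∃ M : Set (Sym2 V), IsPerfectMatchingSet G M := by
  classical
  have hkey := key_induction ((∅ᶜ : Set V).ncard) G ∅ rfl hT.IsAcyclic
    (by simp)
  have h1 : (¬ ∃ x : V → ℝ, x ≠ 0 ∧ (∀ s ∈ (∅ : Set V), x s = 0) ∧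
      G.adjMatrix ℝ *ᵥ x = 0) ↔ ¬ IsSingular G := by
    unfold IsSingular
    simp
  have h2 : (∃ M : Set (Sym2 V), IsMatchingSet G M ∧ ∀ w ∉ (∅ : Set V),
      Saturates M w) ↔ ∃ M : Set (Sym2 V), IsPerfectMatchingSet G M := by
    unfold IsPerfectMatchingSet
    simp
  rw [← h1, ← h2]
  exact hkey
end

section
/- For a tree T, the support of the null space of its adjacency matrix is an independent set of T. That is, no two vertices in Supp(T) are adjacent. -/
open SimpleGraph Matrix

attribute [local instance] Classical.propDecidable

lemma key_acyclic {V : Type*} [Fintype V] {G : SimpleGraph V} (hA : G.IsAcyclic)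
    (z : V → ℝ) (hz : G.adjMatrix ℝ *ᵥ z = 0) {u v : V} (huv : G.Adj u v)
    (hu : z u ≠ 0) (hv : z v ≠ 0) : False := by
  classical
  -- set of lengths of paths ending at u, all of whose vertices have z ≠ 0, length ≥ 1
  set S : Set ℕ := {n | ∃ (w : V) (p : G.Walk w u), p.IsPath ∧
      (∀ x ∈ p.support, z x ≠ 0) ∧ 1 ≤ p.length ∧ p.length = n} with hS
  have hne : S.Nonempty := by
    refine ⟨1, v, Walk.cons huv.symm Walk.nil, ?_, ?_, ?_, ?_⟩
    · simp [huv.symm.ne]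
    · intro x hx
      have : x = v ∨ x = u := by simpa using hx
      rcases this with rfl | rfl
      · exact hv
      · exact hu
    · simp
    · simp
  have hbdd : BddAbove S := by
    refine ⟨Fintype.card V, fun n hn => ?_⟩
    obtain ⟨w, p, hp, -, -, hlen⟩ := hn
    exact hlen ▸ hp.length_lt.le
  obtain ⟨w, p, hp, hsupp, hlen1, hlenN⟩ := Nat.sSup_mem hne hbdd
  set N := sSup S with hN
  cases p with
  | nil => simp at hlen1
  | @cons _ s _ h q =>
    -- h : G.Adj w s, q : Walk s u
    have hzw : z w ≠ 0 := hsupp w (by simp)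
    have hzs : z s ≠ 0 := hsupp s (by simp [Walk.support_cons, q.start_mem_support])
    -- kernel equation at w
    have hsum : ∑ x ∈ G.neighborFinset w, z x = 0 := by
      have := congrFun hz w
      rwa [adjMatrix_mulVec_apply] at this
    have hsmem : s ∈ G.neighborFinset w := by simpa using h
    have hrest : ∑ x ∈ (G.neighborFinset w).erase s, z x = - z s := by
      have := Finset.add_sum_erase _ z hsmem
      linarith [this.symm ▸ hsum]
    have hex : ∃ q' ∈ (G.neighborFinset w).erase s, z q' ≠ 0 := by
      by_contra hcon
      push_neg at hcon
      rw [Finset.sum_eq_zero hcon] at hrest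
      exact hzs (by linarith)
    obtain ⟨q', hq'mem, hzq'⟩ := hex
    have hq'ne_s : q' ≠ s := (Finset.mem_erase.mp hq'mem).1
    have hwq' : G.Adj w q' := by simpa using (Finset.mem_erase.mp hq'mem).2
    have hq'ne_w : q' ≠ w := fun e => G.irrefl (e ▸ hwq')
    -- q' not in support of the path
    have hq'nsupp : q' ∉ (Walk.cons h q).support := by
      intro hmem
      -- two paths from w to q' : takeUntil, and the single edge; acyclicity forces equality
      have ht : ((Walk.cons h q).takeUntil q' hmem).IsPath := hp.takeUntil hmem
      have heq : ((Walk.cons h q).takeUntil q' hmem) = Walk.cons hwq' Walk.nil := by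
        have := hA.path_unique ⟨(Walk.cons h q).takeUntil q' hmem, ht⟩ (Path.singleton hwq')
        simpa [Path.singleton] using congrArg Subtype.val this
      have hspec := (Walk.cons h q).take_spec hmem
      rw [heq] at hspec
      -- hspec : (cons hwq' nil).append (dropUntil ...) = cons h q
      have h1 : ((Walk.cons hwq' Walk.nil).append ((Walk.cons h q).dropUntil q' hmem)).getVert 1
          = (Walk.cons h q).getVert 1 := by rw [hspec]
      rw [Walk.cons_append] at h1
      simp only [Walk.getVert_cons_succ, Walk.getVert_zero] at h1
      exact hq'ne_s h1
    -- extend the path, contradicting maximality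
    have hmemS : ((Walk.cons h q).length + 1) ∈ S := by
      refine ⟨q', Walk.cons hwq'.symm (Walk.cons h q), ?_, ?_, ?_, ?_⟩
      · rw [Walk.cons_isPath_iff]; exact ⟨hp, hq'nsupp⟩
      · intro x hx
        simp only [Walk.support_cons, List.mem_cons] at hx
        rcases hx with rfl | hx
        · exact hzq'
        · exact hsupp x (by simp only [Walk.support_cons, List.mem_cons]; exact hx)
      · simp
      · simp
    have := le_csSup hbdd hmemS
    omega

lemma key_tree {V : Type*} [Fintype V] (G : SimpleGraph V) (hT : G.IsTree)
    {u v : V} (huv : G.Adj u v)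
    (x y : V → ℝ) (hx : G.adjMatrix ℝ *ᵥ x = 0) (hxu : x u ≠ 0)
    (hy : G.adjMatrix ℝ *ᵥ y = 0) (hyv : y v ≠ 0) : False := by
  classical
  by_cases hxv : x v = 0
  · by_cases hyu : y u = 0
    · refine key_acyclic hT.IsAcyclic (x + y) ?_ huv ?_ ?_
      · rw [mulVec_add, hx, hy, add_zero]
      · simpa [hyu] using hxu
      · simpa [hxv] using hyv
    · refine key_acyclic hT.IsAcyclic (x + (x u / y u) • y) ?_ huv ?_ ?_
      · rw [mulVec_add, mulVec_smul, hx, hy, smul_zero, add_zero]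
      · have : x u + (x u / y u) * y u = 2 * x u := by field_simp; ring
        simp only [Pi.add_apply, Pi.smul_apply, smul_eq_mul, this]
        exact mul_ne_zero two_ne_zero hxu
      · simp only [Pi.add_apply, Pi.smul_apply, smul_eq_mul, hxv, zero_add]
        exact mul_ne_zero (div_ne_zero hxu hyu) hyv
  · exact key_acyclic hT.IsAcyclic x hx huv hxu hxv

theorem supp_isIndepSet {V : Type*} [Fintype V] (G : SimpleGraph V) (hT : G.IsTree) :
    _root_.IsIndepSet G (nullSupp G) := by
  intro u hu v hv _hne hadj
  obtain ⟨x, hx, hxu⟩ := hu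
  obtain ⟨y, hy, hyv⟩ := hv
  exact key_tree G hT hadj x y hx hxu hy hyv
end

section
/- For a tree T, the set of Edmonds–Gallai vertices equals the support of the null space: EG(T) = Supp(T). That is, a vertex v of T is missed by some maximum matching of T if and only if some null vector of the adjacency matrix of T is nonzero at v. -/
open SimpleGraph Matrix

attribute [local instance] Classical.propDecidable

section AuxA

variable {V : Type*}

lemma avoid_adj {G : SimpleGraph V} {S : Set V} {a b : V} :
    (avoid G S).Adj a b ↔ G.Adj a b ∧ a ∉ S ∧ b ∉ S := Iff.rfl

lemma avoid_le (G : SimpleGraph V) (S : Set V) : avoid G S ≤ G := fun _ _ h => h.1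

lemma isAcyclic_avoid {G : SimpleGraph V} (h : G.IsAcyclic) (S : Set V) :
    (avoid G S).IsAcyclic := by
  intro v p hp
  exact h (p.mapLe (avoid_le G S)) (hp.mapLe _)

lemma mem_edgeSet_avoid {G : SimpleGraph V} {S : Set V} {e : Sym2 V} :
    e ∈ (avoid G S).edgeSet ↔ e ∈ G.edgeSet ∧ ∀ v ∈ e, v ∉ S := by
  induction e using Sym2.ind with
  | _ a b =>
    simp only [SimpleGraph.mem_edgeSet, avoid_adj, Sym2.mem_iff]
    constructor
    · rintro ⟨h, ha, hb⟩
      exact ⟨h, by rintro v (rfl | rfl) <;> assumption⟩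
    · rintro ⟨h, hv⟩
      exact ⟨h, hv a (Or.inl rfl), hv b (Or.inr rfl)⟩

variable [Fintype V]

lemma matchNum_bddAbove (G : SimpleGraph V) :
    BddAbove {n | ∃ M : Set (Sym2 V), IsMatchingSet G M ∧ M.ncard = n} := by
  refine ⟨Nat.card (Sym2 V), ?_⟩
  rintro n ⟨M, _, rfl⟩
  calc M.ncard ≤ (Set.univ : Set (Sym2 V)).ncard :=
        Set.ncard_le_ncard (Set.subset_univ M) Set.finite_univ
    _ = Nat.card (Sym2 V) := Set.ncard_univ _

lemma empty_isMatchingSet (G : SimpleGraph V) : IsMatchingSet G (∅ : Set (Sym2 V)) :=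
  ⟨Set.empty_subset _, Set.pairwise_empty _⟩

lemma exists_maxMatching (G : SimpleGraph V) : ∃ M, IsMaxMatching G M := by
  have hne : {n | ∃ M : Set (Sym2 V), IsMatchingSet G M ∧ M.ncard = n}.Nonempty :=
    ⟨0, ∅, empty_isMatchingSet G, by simp⟩
  obtain ⟨M, hM, hcard⟩ := Nat.sSup_mem hne (matchNum_bddAbove G)
  exact ⟨M, hM, hcard⟩

lemma ncard_le_matchNum {G : SimpleGraph V} {M : Set (Sym2 V)} (h : IsMatchingSet G M) :
    M.ncard ≤ matchNum G := le_csSup (matchNum_bddAbove G) ⟨M, h, rfl⟩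

lemma isMatchingSet_avoid {G : SimpleGraph V} {S : Set V} {M : Set (Sym2 V)} :
    IsMatchingSet (avoid G S) M ↔ IsMatchingSet G M ∧ ∀ e ∈ M, ∀ v ∈ e, v ∉ S := by
  constructor
  · rintro ⟨hsub, hpw⟩
    exact ⟨⟨fun e he => (mem_edgeSet_avoid.mp (hsub he)).1, hpw⟩,
      fun e he => (mem_edgeSet_avoid.mp (hsub he)).2⟩
  · rintro ⟨⟨hsub, hpw⟩, hS⟩
    exact ⟨fun e he => mem_edgeSet_avoid.mpr ⟨hsub he, hS e he⟩, hpw⟩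

lemma matchNum_avoid_le (G : SimpleGraph V) (S : Set V) :
    matchNum (avoid G S) ≤ matchNum G := by
  apply csSup_le _ _
  · exact ⟨0, ∅, empty_isMatchingSet _, by simp⟩
  · rintro n ⟨M, hM, rfl⟩
    exact ncard_le_matchNum (isMatchingSet_avoid.mp hM).1

lemma eg_iff {G : SimpleGraph V} {v : V} :
    (∃ M, IsMaxMatching G M ∧ ¬ Saturates M v) ↔
      matchNum (avoid G ({v} : Set V)) = matchNum G := by
  constructor
  · rintro ⟨M, ⟨hM, hcard⟩, hsat⟩
    have hMav : IsMatchingSet (avoid G ({v} : Set V)) M := by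
      rw [isMatchingSet_avoid]
      refine ⟨hM, fun e he x hx => ?_⟩
      simp only [Set.mem_singleton_iff]
      rintro rfl
      exact hsat ⟨e, he, hx⟩
    exact le_antisymm (matchNum_avoid_le G _) (hcard ▸ ncard_le_matchNum hMav)
  · intro h
    obtain ⟨M, hM, hcard⟩ := exists_maxMatching (avoid G ({v} : Set V))
    rw [isMatchingSet_avoid] at hM
    refine ⟨M, ⟨hM.1, by rw [hcard, h]⟩, ?_⟩
    rintro ⟨e, he, hv⟩
    exact hM.2 e he v hv rfl

end AuxA

section AuxB
variable {V : Type*} [Fintype V]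

lemma exists_leaf_s4 {H : SimpleGraph V} (hac : H.IsAcyclic) (hne : H.edgeSet.Nonempty) :
    ∃ u w : V, H.neighborSet u = {w} := by
  obtain ⟨e, he⟩ := hne
  induction e using Sym2.ind with
  | _ a b =>
  rw [SimpleGraph.mem_edgeSet] at he
  set S : Set ℕ := {n | ∃ (x y : V) (p : H.Walk x y), p.IsPath ∧ p.length = n} with hS
  have h1S : 1 ∈ S := by
    refine ⟨a, b, Walk.cons he Walk.nil, ?_, by simp⟩
    rw [Walk.cons_isPath_iff]
    exact ⟨Walk.IsPath.nil, by simp [he.ne]⟩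
  have hSbdd : BddAbove S := ⟨Fintype.card V, by rintro n ⟨x, y, p, hp, rfl⟩; exact hp.length_lt.le⟩
  obtain ⟨x, y, p, hp, hplen⟩ := Nat.sSup_mem ⟨1, h1S⟩ hSbdd
  have h1n : 1 ≤ sSup S := le_csSup hSbdd h1S
  have hxy : x ≠ y := by
    rintro rfl
    rw [Walk.isPath_iff_eq_nil] at hp
    subst hp
    simp only [Walk.length_nil] at hplen
    omega
  obtain ⟨w, hyw, q', hq⟩ := Walk.exists_eq_cons_of_ne (Ne.symm hxy) p.reverse
  have hprev : p.reverse.IsPath := hp.reverse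
  have hq'path : q'.IsPath ∧ y ∉ q'.support := by
    have := hprev
    rw [hq, Walk.cons_isPath_iff] at this
    exact this
  refine ⟨y, w, ?_⟩
  ext c
  simp only [SimpleGraph.mem_neighborSet, Set.mem_singleton_iff]
  constructor
  · intro hyc
    by_cases hcsupp : c ∈ p.reverse.support
    · have hcy : c ≠ y := fun h => H.loopless.irrefl y (h ▸ hyc)
      have hcq' : c ∈ q'.support := by
        rw [hq, Walk.support_cons, List.mem_cons] at hcsupp
        rcases hcsupp with h | h
        · exact absurd h hcy
        · exact h
      have hpath1 : (Walk.cons hyc Walk.nil : H.Walk y c).IsPath := by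
        rw [Walk.cons_isPath_iff]
        exact ⟨Walk.IsPath.nil, by simp [hyc.ne]⟩
      have hyq : y ∉ (q'.takeUntil c hcq').support :=
        fun hmem => hq'path.2 (Walk.support_takeUntil_subset _ hcq' hmem)
      have hpath2 : (Walk.cons hyw (q'.takeUntil c hcq') : H.Walk y c).IsPath :=
        (hq'path.1.takeUntil hcq').cons hyq
      have huniq := hac.path_unique ⟨_, hpath1⟩ ⟨_, hpath2⟩
      have hwalk : (Walk.cons hyc Walk.nil : H.Walk y c) = Walk.cons hyw (q'.takeUntil c hcq') :=
        congrArg Subtype.val huniq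
      have hsup := congrArg Walk.support hwalk
      rw [Walk.support_cons, Walk.support_cons, Walk.support_nil,
        Walk.support_eq_cons (q'.takeUntil c hcq')] at hsup
      simp only [List.cons.injEq] at hsup
      exact hsup.2.1
    · exfalso
      have hpath : (Walk.cons hyc.symm p.reverse : H.Walk c x).IsPath := hprev.cons hcsupp
      have hmem : p.reverse.length + 1 ∈ S := ⟨c, x, _, hpath, by simp [Walk.length_cons]⟩
      have hle := le_csSup hSbdd hmem
      rw [Walk.length_reverse, hplen] at hle
      omega
  · rintro rfl
    exact hyw

end AuxB

section AuxC
variable {V : Type*} [Fintype V]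

lemma edge_at_leaf {H : SimpleGraph V} {u w : V} (h : H.neighborSet u = {w}) {e : Sym2 V}
    (he : e ∈ H.edgeSet) (hu : u ∈ e) : e = s(u, w) := by
  induction e using Sym2.ind with
  | _ a b =>
  rw [SimpleGraph.mem_edgeSet] at he
  rw [Sym2.mem_iff] at hu
  rcases hu with rfl | rfl
  · have : b ∈ H.neighborSet u := he
    rw [h, Set.mem_singleton_iff] at this
    subst this; rfl
  · have : a ∈ H.neighborSet u := he.symm
    rw [h, Set.mem_singleton_iff] at this
    subst this
    exact Sym2.eq_swap

lemma adj_of_leaf {H : SimpleGraph V} {u w : V} (h : H.neighborSet u = {w}) : H.Adj u w := by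
  have : w ∈ H.neighborSet u := by rw [h]; rfl
  exact this

lemma matchNum_leaf {H : SimpleGraph V} {u w : V} (h : H.neighborSet u = {w}) :
    matchNum H = matchNum (avoid H ({u, w} : Set V)) + 1 := by
  have huw : H.Adj u w := adj_of_leaf h
  have hne : u ≠ w := huw.ne
  apply le_antisymm
  · -- ν(H) ≤ ν' + 1
    obtain ⟨M, hM, hcard⟩ := exists_maxMatching H
    set D : Set (Sym2 V) := {e ∈ M | u ∈ e ∨ w ∈ e} with hD
    have hDM : D ⊆ M := Set.sep_subset _ _
    have hDsub : D.Subsingleton := by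
      intro e heD f hfD
      by_contra hef
      have hwe : w ∈ e := by
        rcases heD.2 with h' | h'
        · rw [edge_at_leaf h (hM.1 heD.1) h']; simp
        · exact h'
      have hwf : w ∈ f := by
        rcases hfD.2 with h' | h'
        · rw [edge_at_leaf h (hM.1 hfD.1) h']; simp
        · exact h'
      exact hM.2 heD.1 hfD.1 hef w ⟨hwe, hwf⟩
    have hM' : IsMatchingSet (avoid H ({u, w} : Set V)) (M \ D) := by
      rw [isMatchingSet_avoid]
      refine ⟨⟨fun e he => hM.1 he.1, hM.2.mono Set.diff_subset⟩, ?_⟩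
      rintro e ⟨heM, heD⟩ x hx
      simp only [Set.mem_insert_iff, Set.mem_singleton_iff]
      rintro (rfl | rfl) <;> exact heD ⟨heM, by tauto⟩
    have hcard' : M.ncard ≤ (M \ D).ncard + 1 := by
      have h1 : M = (M \ D) ∪ D := (Set.diff_union_of_subset hDM).symm
      calc M.ncard = ((M \ D) ∪ D).ncard := by rw [← h1]
        _ ≤ (M \ D).ncard + D.ncard := Set.ncard_union_le _ _
        _ ≤ (M \ D).ncard + 1 := by
            have h2 : D.ncard ≤ 1 := by
              rw [Set.ncard_le_one (Set.toFinite D)]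
              exact fun a ha b hb => hDsub ha hb
            omega
    calc matchNum H = M.ncard := hcard.symm
      _ ≤ (M \ D).ncard + 1 := hcard'
      _ ≤ matchNum (avoid H ({u, w} : Set V)) + 1 := by
          have := ncard_le_matchNum hM'
          omega
  · -- ν' + 1 ≤ ν(H)
    obtain ⟨M', hM', hcard'⟩ := exists_maxMatching (avoid H ({u, w} : Set V))
    rw [isMatchingSet_avoid] at hM'
    have hnotmem : s(u, w) ∉ M' := fun hmem => hM'.2 _ hmem u (by simp) (by simp)
    have hmatch : IsMatchingSet H (insert s(u, w) M') := by
      constructor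
      · rintro e (rfl | heM')
        · exact huw
        · exact hM'.1.1 heM'
      · haveI : Std.Symm (fun e f : Sym2 V => ∀ v : V, ¬(v ∈ e ∧ v ∈ f)) := ⟨fun e f hef x => by tauto⟩
        rw [Set.pairwise_insert_of_symm]
        · refine ⟨hM'.1.2, ?_⟩
          intro f hf _ x ⟨hx1, hx2⟩
          rw [Sym2.mem_iff] at hx1
          rcases hx1 with rfl | rfl
          · exact hM'.2 f hf x hx2 (by simp)
          · exact hM'.2 f hf x hx2 (by simp)
    have : (insert s(u, w) M').ncard = M'.ncard + 1 :=
      Set.ncard_insert_of_notMem hnotmem (Set.toFinite M')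
    calc matchNum (avoid H ({u, w} : Set V)) + 1 = (insert s(u, w) M').ncard := by
          rw [this, hcard']
      _ ≤ matchNum H := ncard_le_matchNum hmatch

lemma edgeSet_avoid_ncard_lt {H : SimpleGraph V} {u w : V} (huw : H.Adj u w) :
    (avoid H ({u, w} : Set V)).edgeSet.ncard < H.edgeSet.ncard := by
  apply Set.ncard_lt_ncard _ (Set.toFinite _)
  constructor
  · intro e he
    exact (mem_edgeSet_avoid.mp he).1
  · intro hsub
    have h1 : s(u, w) ∈ H.edgeSet := huw
    have h2 := mem_edgeSet_avoid.mp (hsub h1)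
    exact h2.2 u (by simp) (by simp)

end AuxC

section AuxD
variable {V : Type*} [Fintype V]

/-- null space of the adjacency matrix as a submodule -/
noncomputable def nsp (G : SimpleGraph V) : Submodule ℝ (V → ℝ) :=
  LinearMap.ker (Matrix.mulVecLin (G.adjMatrix ℝ))

lemma mem_nsp {G : SimpleGraph V} {x : V → ℝ} : x ∈ nsp G ↔ G.adjMatrix ℝ *ᵥ x = 0 := by
  simp [nsp, LinearMap.mem_ker, Matrix.mulVecLin_apply]

lemma finrank_sup_span_singleton {W : Type*} [AddCommGroup W] [Module ℝ W]
    [FiniteDimensional ℝ W] {M : Submodule ℝ W} {z : W} (hz : z ∉ M) :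
    Module.finrank ℝ ↥(M ⊔ Submodule.span ℝ {z}) = Module.finrank ℝ M + 1 := by
  have hz0 : z ≠ 0 := fun h => hz (h ▸ M.zero_mem)
  have hinf : M ⊓ Submodule.span ℝ {z} = ⊥ := by
    rw [Submodule.eq_bot_iff]
    rintro x ⟨hxM, hxz⟩
    obtain ⟨c, rfl⟩ := Submodule.mem_span_singleton.mp hxz
    rcases eq_or_ne c 0 with rfl | hc
    · simp
    · exfalso
      apply hz
      have := M.smul_mem c⁻¹ hxM
      rwa [smul_smul, inv_mul_cancel₀ hc, one_smul] at this
  have key := Submodule.finrank_sup_add_finrank_inf_eq M (Submodule.span ℝ {z})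
  rw [hinf, finrank_span_singleton hz0] at key
  simpa using key

lemma mulVec_apply' (A : Matrix V V ℝ) (x : V → ℝ) (t : V) :
    (A *ᵥ x) t = ∑ s, A t s * x s := rfl

lemma avoid_adjMatrix_zero_left {G : SimpleGraph V} {S : Set V} {t s : V} (ht : t ∈ S) :
    (avoid G S).adjMatrix ℝ t s = 0 := by
  rw [SimpleGraph.adjMatrix_apply, if_neg]
  rintro ⟨-, h, -⟩; exact h ht

lemma avoid_adjMatrix_zero_right {G : SimpleGraph V} {S : Set V} {t s : V} (hs : s ∈ S) :
    (avoid G S).adjMatrix ℝ t s = 0 := by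
  rw [SimpleGraph.adjMatrix_apply, if_neg]
  rintro ⟨-, -, h⟩; exact h hs

lemma avoid_adjMatrix_eq {G : SimpleGraph V} {S : Set V} {t s : V} (ht : t ∉ S) (hs : s ∉ S) :
    (avoid G S).adjMatrix ℝ t s = G.adjMatrix ℝ t s := by
  rw [SimpleGraph.adjMatrix_apply, SimpleGraph.adjMatrix_apply]
  by_cases h : G.Adj t s
  · rw [if_pos ⟨h, ht, hs⟩, if_pos h]
  · rw [if_neg (fun h' => h h'.1), if_neg h]

/-- row of avoided vertex is zero -/
lemma mulVec_avoid_zero {G : SimpleGraph V} {S : Set V} (x : V → ℝ) {t : V} (ht : t ∈ S) :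
    ((avoid G S).adjMatrix ℝ *ᵥ x) t = 0 := by
  rw [mulVec_apply']
  exact Finset.sum_eq_zero fun s _ => by rw [avoid_adjMatrix_zero_left ht, zero_mul]

/-- if `x` vanishes on `S`, mulVec by the avoided and full adjacency matrices agree off `S` -/
lemma mulVec_avoid_eq {G : SimpleGraph V} {S : Set V} {x : V → ℝ} (hx : ∀ v ∈ S, x v = 0)
    {t : V} (ht : t ∉ S) :
    ((avoid G S).adjMatrix ℝ *ᵥ x) t = (G.adjMatrix ℝ *ᵥ x) t := by
  rw [mulVec_apply', mulVec_apply']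
  refine Finset.sum_congr rfl fun s _ => ?_
  by_cases hs : s ∈ S
  · rw [hx s hs, mul_zero, mul_zero]
  · rw [avoid_adjMatrix_eq ht hs]

lemma single_mem_nsp_avoid {G : SimpleGraph V} {S : Set V} {v : V} (hv : v ∈ S) :
    Pi.single v (1 : ℝ) ∈ nsp (avoid G S) := by
  rw [mem_nsp]
  funext t
  have hnadj : ¬ (avoid G S).Adj t v := fun h => h.2.2 hv
  simp [Matrix.mulVec_single, hnadj]


lemma nsp_avoid_of_vanish {G : SimpleGraph V} {S : Set V} {x : V → ℝ} (hx : x ∈ nsp G)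
    (hvan : ∀ u ∈ S, x u = 0) : x ∈ nsp (avoid G S) := by
  rw [mem_nsp]
  funext t
  by_cases ht : t ∈ S
  · simp [mulVec_avoid_zero x ht]
  · rw [mem_nsp] at hx
    rw [mulVec_avoid_eq hvan ht, hx]

lemma vecMul_adjMatrix (G : SimpleGraph V) (x : V → ℝ) :
    x ᵥ* G.adjMatrix ℝ = G.adjMatrix ℝ *ᵥ x := by
  nth_rewrite 1 [← transpose_adjMatrix]
  rw [Matrix.vecMul_transpose]

lemma finrank_nsp_avoid_of_not_supp {G : SimpleGraph V} {v : V} (hv : v ∉ nullSupp G) :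
    Module.finrank ℝ ↥(nsp G) + 1 ≤ Module.finrank ℝ ↥(nsp (avoid G ({v} : Set V))) := by
  have hvan : ∀ x ∈ nsp G, x v = 0 := by
    intro x hx
    by_contra h
    exact hv ⟨x, mem_nsp.mp hx, h⟩
  have hev : Pi.single v (1:ℝ) ∈ nsp (avoid G ({v} : Set V)) := single_mem_nsp_avoid rfl
  have hNle : nsp G ≤ nsp (avoid G ({v} : Set V)) := by
    intro x hx
    refine nsp_avoid_of_vanish hx ?_
    intro u hu
    rw [Set.mem_singleton_iff] at hu
    subst hu
    exact hvan x hx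
  have hevN : Pi.single v (1:ℝ) ∉ nsp G := by
    intro h
    have := hvan _ h
    simp at this
  have hsup_le : nsp G ⊔ Submodule.span ℝ {Pi.single v (1:ℝ)} ≤ nsp (avoid G ({v} : Set V)) :=
    sup_le hNle ((Submodule.span_singleton_le_iff_mem _ _).mpr hev)
  calc Module.finrank ℝ ↥(nsp G) + 1
      = Module.finrank ℝ ↥(nsp G ⊔ Submodule.span ℝ {Pi.single v (1:ℝ)}) :=
        (finrank_sup_span_singleton hevN).symm
    _ ≤ _ := Submodule.finrank_mono hsup_le

lemma finrank_nsp_avoid_of_supp {G : SimpleGraph V} {v : V} (hv : v ∈ nullSupp G) :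
    Module.finrank ℝ ↥(nsp (avoid G ({v} : Set V))) = Module.finrank ℝ ↥(nsp G) := by
  obtain ⟨x₀, hx₀null, hx₀v⟩ := hv
  have hx₀ : x₀ ∈ nsp G := mem_nsp.mpr hx₀null
  set N₀ : Submodule ℝ (V → ℝ) :=
    nsp G ⊓ LinearMap.ker (LinearMap.proj v : (V → ℝ) →ₗ[ℝ] ℝ) with hN₀
  have hmemN₀ : ∀ x : V → ℝ, x ∈ N₀ ↔ x ∈ nsp G ∧ x v = 0 := fun x => by
    simp [hN₀, LinearMap.mem_ker, Submodule.mem_inf]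
  have hev : Pi.single v (1:ℝ) ∈ nsp (avoid G ({v} : Set V)) := single_mem_nsp_avoid rfl
  have hN₀le : N₀ ≤ nsp (avoid G ({v} : Set V)) := by
    intro x hx
    rw [hmemN₀] at hx
    refine nsp_avoid_of_vanish hx.1 ?_
    intro u hu
    rw [Set.mem_singleton_iff] at hu
    subst hu
    exact hx.2
  -- Claim A : nsp G = N₀ ⊔ span x₀
  have claimA : nsp G = N₀ ⊔ Submodule.span ℝ {x₀} := by
    apply le_antisymm
    · intro y hy
      have hz : y - (y v / x₀ v) • x₀ ∈ N₀ := by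
        rw [hmemN₀]
        constructor
        · exact sub_mem hy (Submodule.smul_mem _ _ hx₀)
        · simp only [Pi.sub_apply, Pi.smul_apply, smul_eq_mul]
          rw [div_mul_cancel₀ _ hx₀v]
          ring
      have hdecomp : y = (y - (y v / x₀ v) • x₀) + (y v / x₀ v) • x₀ := by abel
      rw [hdecomp]
      exact Submodule.add_mem_sup hz
        (Submodule.smul_mem _ _ (Submodule.mem_span_singleton_self x₀))
    · exact sup_le inf_le_left ((Submodule.span_singleton_le_iff_mem _ _).mpr hx₀)
  have hx₀N₀ : x₀ ∉ N₀ := fun h => hx₀v ((hmemN₀ x₀).mp h).2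
  have hevN₀ : Pi.single v (1:ℝ) ∉ N₀ := by
    intro h
    have := ((hmemN₀ _).mp h).2
    simp at this
  -- Claim B : nsp (avoid G {v}) = N₀ ⊔ span e_v
  have claimB : nsp (avoid G ({v} : Set V)) = N₀ ⊔ Submodule.span ℝ {Pi.single v (1:ℝ)} := by
    apply le_antisymm
    · intro y hy
      set z := y - y v • (Pi.single v 1 : V → ℝ) with hzdef
      have hzv : z v = 0 := by simp [hzdef]
      have hz_in : z ∈ nsp (avoid G ({v} : Set V)) :=
        sub_mem hy (Submodule.smul_mem _ _ hev)
      have hz_off : ∀ t, t ≠ v → (G.adjMatrix ℝ *ᵥ z) t = 0 := by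
        intro t ht
        have hvanz : ∀ u ∈ ({v} : Set V), z u = 0 := by
          intro u hu
          rw [Set.mem_singleton_iff] at hu
          subst hu
          exact hzv
        rw [← mulVec_avoid_eq hvanz (by simpa using ht)]
        rw [mem_nsp] at hz_in
        rw [hz_in]
        rfl
      set c := (G.adjMatrix ℝ *ᵥ z) v with hc
      have hAz : G.adjMatrix ℝ *ᵥ z = c • (Pi.single v 1 : V → ℝ) := by
        funext t
        by_cases ht : t = v
        · subst ht
          simp only [Pi.smul_apply, Pi.single_eq_same, smul_eq_mul, mul_one]
          exact hc.symm
        · rw [hz_off t ht]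
          simp [Pi.single_apply, ht]
      have hdot : x₀ ⬝ᵥ (G.adjMatrix ℝ *ᵥ z) = 0 := by
        rw [Matrix.dotProduct_mulVec, vecMul_adjMatrix, hx₀null]
        simp
      rw [hAz] at hdot
      have hc0 : c = 0 := by
        rw [dotProduct_smul, dotProduct_single, mul_one] at hdot
        rcases mul_eq_zero.mp hdot with h | h
        · exact h
        · exact absurd h hx₀v
      have hzN₀ : z ∈ N₀ := by
        rw [hmemN₀]
        refine ⟨mem_nsp.mpr (by rw [hAz, hc0, zero_smul]), hzv⟩
      have hdecomp : y = z + y v • (Pi.single v 1 : V → ℝ) := by rw [hzdef]; abel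
      rw [hdecomp]
      exact Submodule.add_mem_sup hzN₀
        (Submodule.smul_mem _ _ (Submodule.mem_span_singleton_self _))
    · exact sup_le hN₀le ((Submodule.span_singleton_le_iff_mem _ _).mpr hev)
  rw [claimA, claimB, finrank_sup_span_singleton hevN₀, finrank_sup_span_singleton hx₀N₀]


lemma adj_of_leaf' {H : SimpleGraph V} {u w : V} (h : H.neighborSet u = {w}) : H.Adj u w := by
  have : w ∈ H.neighborSet u := by rw [h]; rfl
  exact this

lemma nullity_leaf {H : SimpleGraph V} {u w : V} (h : H.neighborSet u = {w}) :
    Module.finrank ℝ ↥(nsp (avoid H ({u, w} : Set V))) = Module.finrank ℝ ↥(nsp H) + 2 := by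
  have huw : H.Adj u w := adj_of_leaf' h
  have hne : u ≠ w := huw.ne
  set A := H.adjMatrix ℝ with hA
  set S : Set V := {u, w} with hS
  have hmemS : ∀ s, s ∈ S ↔ s = u ∨ s = w := fun s => by simp [hS]
  have huS : u ∈ S := (hmemS u).mpr (Or.inl rfl)
  have hwS : w ∈ S := (hmemS w).mpr (Or.inr rfl)
  have hAus : ∀ s, A u s = if s = w then 1 else 0 := by
    intro s
    rw [hA, SimpleGraph.adjMatrix_apply]
    by_cases hsw : s = w
    · subst hsw
      rw [if_pos rfl, if_pos huw]
    · rw [if_neg hsw, if_neg]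
      intro hadj
      have : s ∈ H.neighborSet u := hadj
      rw [h, Set.mem_singleton_iff] at this
      exact hsw this
  have hAu_mulvec : ∀ x : V → ℝ, (A *ᵥ x) u = x w := by
    intro x
    rw [mulVec_apply']
    calc ∑ s, A u s * x s = ∑ s, (if s = w then x s else 0) :=
          Finset.sum_congr rfl fun s _ => by rw [hAus]; split_ifs <;> simp
      _ = x w := by rw [Finset.sum_ite_eq' Finset.univ w (fun s => x s), if_pos (Finset.mem_univ w)]
  have hAtu : ∀ t, t ≠ w → A t u = 0 := by
    intro t ht
    rw [hA, SimpleGraph.adjMatrix_apply, if_neg]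
    intro hadj
    have : t ∈ H.neighborSet u := hadj.symm
    rw [h, Set.mem_singleton_iff] at this
    exact ht this
  have hAwu : A w u = 1 := by rw [hA, SimpleGraph.adjMatrix_apply, if_pos huw.symm]
  have hx_w0 : ∀ x ∈ nsp H, x w = 0 := by
    intro x hx
    have h1 := congrFun (mem_nsp.mp hx) u
    rw [hAu_mulvec] at h1
    simpa using h1
  set M₀ : Submodule ℝ (V → ℝ) :=
    (nsp (avoid H S) ⊓ LinearMap.ker (LinearMap.proj u : (V → ℝ) →ₗ[ℝ] ℝ)) ⊓
      LinearMap.ker (LinearMap.proj w : (V → ℝ) →ₗ[ℝ] ℝ) with hM₀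
  have hmemM₀ : ∀ x : V → ℝ, x ∈ M₀ ↔ x ∈ nsp (avoid H S) ∧ x u = 0 ∧ x w = 0 := fun x => by
    simp only [hM₀, Submodule.mem_inf, LinearMap.mem_ker, LinearMap.proj_apply]
    tauto
  set eu : V → ℝ := Pi.single u 1 with heu
  set ew : V → ℝ := Pi.single w 1 with hew
  have hAeu : ∀ t, (A *ᵥ eu) t = A t u := by
    intro t
    simp [heu, Matrix.mulVec_single]
  set φ : (V → ℝ) →ₗ[ℝ] (V → ℝ) :=
    LinearMap.id - (LinearMap.smulRight (LinearMap.proj u : (V → ℝ) →ₗ[ℝ] ℝ) eu) with hφ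
  set ψ : (V → ℝ) →ₗ[ℝ] (V → ℝ) :=
    LinearMap.id -
      (LinearMap.smulRight ((LinearMap.proj w : (V → ℝ) →ₗ[ℝ] ℝ).comp A.mulVecLin) eu) with hψ
  have hφ_apply : ∀ x : V → ℝ, φ x = x - x u • eu := fun x => by
    simp [hφ, LinearMap.smulRight_apply]
  have hψ_apply : ∀ y : V → ℝ, ψ y = y - (A *ᵥ y) w • eu := fun y => by
    simp [hψ, LinearMap.smulRight_apply, Matrix.mulVecLin_apply]
  have hφmem : ∀ x ∈ nsp H, φ x ∈ M₀ := by
    intro x hx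
    have hxw := hx_w0 x hx
    have hxnull := mem_nsp.mp hx
    rw [← hA] at hxnull
    rw [hmemM₀, hφ_apply]
    refine ⟨?_, ?_, ?_⟩
    · rw [mem_nsp]
      funext t
      by_cases ht : t ∈ S
      · simp [mulVec_avoid_zero _ ht]
      · have htu : t ≠ u := fun h' => ht ((hmemS t).mpr (Or.inl h'))
        have htw : t ≠ w := fun h' => ht ((hmemS t).mpr (Or.inr h'))
        have hvan : ∀ s ∈ S, (x - x u • eu) s = 0 := by
          intro s hs
          rcases (hmemS s).mp hs with rfl | rfl
          · simp [heu]
          · simp [heu, Pi.single_apply, hne.symm, hxw]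
        rw [mulVec_avoid_eq hvan ht, Matrix.mulVec_sub, Matrix.mulVec_smul]
        simp [← hA, congrFun hxnull t, hAeu t, hAtu t htw, -adjMatrix_mulVec_apply]
    · simp [heu]
    · simp [heu, Pi.single_apply, hne.symm, hxw]
  have hψmem : ∀ y ∈ M₀, ψ y ∈ nsp H := by
    intro y hy
    rw [hmemM₀] at hy
    obtain ⟨hyNB, hyu, hyw⟩ := hy
    have hyB := mem_nsp.mp hyNB
    have hvan : ∀ s ∈ S, y s = 0 := by
      intro s hs
      rcases (hmemS s).mp hs with rfl | rfl
      · exact hyu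
      · exact hyw
    have hAyt : ∀ t, t ∉ S → (A *ᵥ y) t = 0 := by
      intro t ht
      rw [← mulVec_avoid_eq hvan ht, hyB]
      rfl
    rw [mem_nsp, hψ_apply]
    funext t
    rw [Matrix.mulVec_sub, Matrix.mulVec_smul]
    by_cases htu : t = u
    · subst htu
      have h1 : (A *ᵥ y) t = y w := hAu_mulvec y
      have h2 : (A *ᵥ eu) t = eu w := hAu_mulvec eu
      simp [← hA, h1, h2, hyw, heu, Pi.single_apply, hne.symm, hAtu t hne, -adjMatrix_mulVec_apply]
    · by_cases htw : t = w
      · subst htw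
        simp only [← hA, Pi.sub_apply, Pi.smul_apply, smul_eq_mul, hAeu t, hAwu, mul_one, sub_self]
        rfl
      · have h1 : (A *ᵥ y) t = 0 := hAyt t (fun hmem => by
          rcases (hmemS t).mp hmem with rfl | rfl
          · exact htu rfl
          · exact htw rfl)
        simp [← hA, h1, hAeu t, hAtu t htw, -adjMatrix_mulVec_apply]
  have hψφ : ∀ x ∈ nsp H, ψ (φ x) = x := by
    intro x hx
    have hxnull := mem_nsp.mp hx
    rw [← hA] at hxnull
    rw [hφ_apply, hψ_apply]
    have hkey : (A *ᵥ (x - x u • eu)) w = - x u := by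
      rw [Matrix.mulVec_sub, Matrix.mulVec_smul]
      simp [← hA, congrFun hxnull w, hAeu w, hAwu, -adjMatrix_mulVec_apply]
    rw [hkey]
    simp
  have hφψ : ∀ y ∈ M₀, φ (ψ y) = y := by
    intro y hy
    obtain ⟨-, hyu, -⟩ := (hmemM₀ y).mp hy
    rw [hψ_apply, hφ_apply]
    have hval : (y - (A *ᵥ y) w • eu) u = - (A *ᵥ y) w := by
      simp [heu, hyu]
    rw [hval]
    simp
  have hrank1 : Module.finrank ℝ ↥M₀ = Module.finrank ℝ ↥(nsp H) := by
    apply le_antisymm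
    · apply LinearMap.finrank_le_finrank_of_injective
        (f := LinearMap.codRestrict (nsp H) (ψ.comp M₀.subtype) (fun c => hψmem c c.2))
      intro a b hab
      · 
        have h1 : ψ (a : V → ℝ) = ψ (b : V → ℝ) := congrArg Subtype.val hab
        have h2 : φ (ψ (a : V → ℝ)) = φ (ψ (b : V → ℝ)) := congrArg φ h1
        rw [hφψ _ a.2, hφψ _ b.2] at h2
        exact Subtype.ext h2
    · apply LinearMap.finrank_le_finrank_of_injective
        (f := LinearMap.codRestrict M₀ (φ.comp (nsp H).subtype) (fun c => hφmem c c.2))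
      intro a b hab
      · 
        have h1 : φ (a : V → ℝ) = φ (b : V → ℝ) := congrArg Subtype.val hab
        have h2 : ψ (φ (a : V → ℝ)) = ψ (φ (b : V → ℝ)) := congrArg ψ h1
        rw [hψφ _ a.2, hψφ _ b.2] at h2
        exact Subtype.ext h2
  have heuNB : eu ∈ nsp (avoid H S) := single_mem_nsp_avoid huS
  have hewNB : ew ∈ nsp (avoid H S) := single_mem_nsp_avoid hwS
  have heuM₀ : eu ∉ M₀ := by
    intro hmem
    have := ((hmemM₀ eu).mp hmem).2.1
    simp [heu] at this
  have h1 : Module.finrank ℝ ↥(M₀ ⊔ Submodule.span ℝ {eu}) = Module.finrank ℝ ↥M₀ + 1 :=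
    finrank_sup_span_singleton heuM₀
  have hewM1 : ew ∉ M₀ ⊔ Submodule.span ℝ {eu} := by
    intro hmem
    have hle : M₀ ⊔ Submodule.span ℝ {eu} ≤
        LinearMap.ker (LinearMap.proj w : (V → ℝ) →ₗ[ℝ] ℝ) := by
      apply sup_le
      · rw [hM₀]; exact inf_le_right
      · rw [Submodule.span_singleton_le_iff_mem]
        simp [LinearMap.mem_ker, heu, Pi.single_apply, hne.symm]
    have := hle hmem
    simp [LinearMap.mem_ker, hew] at this
  have h2 : Module.finrank ℝ ↥((M₀ ⊔ Submodule.span ℝ {eu}) ⊔ Submodule.span ℝ {ew}) =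
      Module.finrank ℝ ↥M₀ + 2 := by
    rw [finrank_sup_span_singleton hewM1, h1]
  have hNBeq : nsp (avoid H S) = (M₀ ⊔ Submodule.span ℝ {eu}) ⊔ Submodule.span ℝ {ew} := by
    apply le_antisymm
    · intro y hy
      have hz : y - y u • eu - y w • ew ∈ M₀ := by
        rw [hmemM₀]
        refine ⟨sub_mem (sub_mem hy (Submodule.smul_mem _ _ heuNB))
          (Submodule.smul_mem _ _ hewNB), ?_, ?_⟩
        · simp [heu, hew, Pi.single_apply, hne]
        · simp [heu, hew, Pi.single_apply, hne.symm]
      have hdecomp : y = (y - y u • eu - y w • ew) + y u • eu + y w • ew := by abel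
      rw [hdecomp]
      refine Submodule.add_mem _ (Submodule.add_mem _ ?_ ?_) ?_
      · exact Submodule.mem_sup_left (Submodule.mem_sup_left hz)
      · exact Submodule.mem_sup_left (Submodule.mem_sup_right
          (Submodule.smul_mem _ _ (Submodule.mem_span_singleton_self _)))
      · exact Submodule.mem_sup_right
          (Submodule.smul_mem _ _ (Submodule.mem_span_singleton_self _))
    · refine sup_le (sup_le ?_ ?_) ?_
      · intro x hx
        exact ((hmemM₀ x).mp hx).1
      · rw [Submodule.span_singleton_le_iff_mem]; exact heuNB
      · rw [Submodule.span_singleton_le_iff_mem]; exact hewNB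
  rw [hNBeq, h2, hrank1]

end AuxD


section AuxE
variable {V : Type*} [Fintype V]

lemma matchNum_eq_zero_of_no_edges {H : SimpleGraph V} (he : H.edgeSet = ∅) :
    matchNum H = 0 := by
  apply Nat.le_antisymm _ (Nat.zero_le _)
  refine csSup_le ⟨0, ∅, empty_isMatchingSet H, by simp⟩ ?_
  rintro n ⟨M, hM, rfl⟩
  have : M = ∅ := by
    rw [← Set.subset_empty_iff, ← he]
    exact hM.1
  simp [this]

lemma nullity_of_no_edges {H : SimpleGraph V} (he : H.edgeSet = ∅) :
    Module.finrank ℝ ↥(nsp H) = Fintype.card V := by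
  have hbot : H = ⊥ := SimpleGraph.edgeSet_eq_empty.mp he
  have hmat : H.adjMatrix ℝ = 0 := by
    ext a b
    simp [SimpleGraph.adjMatrix_apply, hbot]
  rw [nsp, hmat]
  rw [Matrix.mulVecLin_zero, LinearMap.ker_zero, finrank_top]
  simp [Module.finrank_pi]

lemma forest_formula : ∀ (n : ℕ) (H : SimpleGraph V), H.edgeSet.ncard = n → H.IsAcyclic →
    Module.finrank ℝ ↥(nsp H) + 2 * matchNum H = Fintype.card V := by
  intro n
  induction n using Nat.strong_induction_on with
  | _ n IH =>
  intro H hcard hac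
  rcases Set.eq_empty_or_nonempty H.edgeSet with he | hne
  · rw [nullity_of_no_edges he, matchNum_eq_zero_of_no_edges he]
    omega
  · obtain ⟨u, w, hleaf⟩ := exists_leaf_s4 hac hne
    have huw := adj_of_leaf' hleaf
    have hlt : (avoid H ({u, w} : Set V)).edgeSet.ncard < n :=
      hcard ▸ edgeSet_avoid_ncard_lt huw
    have hIH := IH _ hlt (avoid H ({u, w} : Set V)) rfl (isAcyclic_avoid hac _)
    have hm := matchNum_leaf hleaf
    have hn := nullity_leaf hleaf
    omega

end AuxE

theorem edmondsGallai_eq_supp {V : Type*} [Fintype V] (G : SimpleGraph V) (hT : G.IsTree) :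
    {v : V | ∃ M : Set (Sym2 V), IsMaxMatching G M ∧ ¬ Saturates M v} = nullSupp G := by
  ext v
  simp only [Set.mem_setOf_eq]
  have hac : G.IsAcyclic := hT.2
  have e1 := forest_formula G.edgeSet.ncard G rfl hac
  have e2 := forest_formula (avoid G ({v} : Set V)).edgeSet.ncard (avoid G ({v} : Set V)) rfl
    (isAcyclic_avoid hac _)
  rw [eg_iff]
  constructor
  · intro hEG
    by_contra hv
    have hge := finrank_nsp_avoid_of_not_supp hv
    omega
  · intro hv
    have heq := finrank_nsp_avoid_of_supp hv
    omega
end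

section
/- Let T be a tree with a perfect matching and let v be any vertex of T. Then there exist maximum independent sets I_1 and I_2 of T such that v ∈ I_1 and v ∉ I_2. -/
open SimpleGraph Matrix

attribute [local instance] Classical.propDecidable

lemma tree_path_length {V : Type*} {G : SimpleGraph V} (hT : G.IsTree) {u w : V}
    (p : G.Walk u w) (hp : p.IsPath) : p.length = G.dist u w := by
  obtain ⟨q, hq, hlen⟩ := hT.isConnected.exists_path_of_dist u w
  have := (hT.existsUnique_path u w).unique hp hq
  rw [this, hlen]

lemma tree_dist_adj {V : Type*} {G : SimpleGraph V} (hT : G.IsTree) {v a b : V}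
    (hab : G.Adj a b) :
    G.dist v a + 1 = G.dist v b ∨ G.dist v b + 1 = G.dist v a := by
  classical
  obtain ⟨p, hp, hlen⟩ := hT.isConnected.exists_path_of_dist v a
  by_cases hb : b ∈ p.support
  · right
    have h1 : (p.takeUntil b hb).length = G.dist v b :=
      tree_path_length hT _ (hp.takeUntil hb)
    have h2 : (p.dropUntil b hb).length = G.dist b a :=
      tree_path_length hT _ (hp.dropUntil hb)
    have h3 : G.dist b a = 1 := SimpleGraph.dist_eq_one_iff_adj.mpr hab.symm
    have h4 := SimpleGraph.Walk.take_spec p hb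
    have h5 : p.length = (p.takeUntil b hb).length + (p.dropUntil b hb).length := by
      conv_lhs => rw [← h4]
      rw [SimpleGraph.Walk.length_append]
    omega
  · left
    have hpath : (p.concat hab).IsPath := by
      rw [← SimpleGraph.Walk.isPath_reverse_iff, SimpleGraph.Walk.reverse_concat]
      rw [SimpleGraph.Walk.cons_isPath_iff]
      constructor
      · rwa [SimpleGraph.Walk.isPath_reverse_iff]
      · rwa [SimpleGraph.Walk.support_reverse, List.mem_reverse]
    have := tree_path_length hT _ hpath
    rw [SimpleGraph.Walk.length_concat, hlen] at this
    omega

theorem nonsingular_tree_maxIndep {V : Type*} [Fintype V] (G : SimpleGraph V) (hT : G.IsTree)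
    (hpm : ∃ M : Set (Sym2 V), IsPerfectMatchingSet G M) (v : V) :
    ∃ I₁ I₂ : Set V, IsMaxIndep G I₁ ∧ IsMaxIndep G I₂ ∧ v ∈ I₁ ∧ v ∉ I₂ := by
  classical
  obtain ⟨M, hMG, hMsat⟩ := hpm
  choose fe hfe1 hfe2 using hMsat
  have huniq : ∀ u : V, ∀ e ∈ M, u ∈ e → fe u = e := by
    intro u e he hue
    by_contra hne
    exact hMG.2 (hfe1 u) he hne u ⟨hfe2 u, hue⟩
  have hadjM : ∀ e ∈ M, ∀ a b : V, a ∈ e → b ∈ e → a ≠ b → G.Adj a b := by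
    intro e he a b ha hb hne
    have : e = s(a, b) := ((Sym2.mem_and_mem_iff hne).mp ⟨ha, hb⟩)
    have := hMG.1 he
    rwa [‹e = s(a,b)›, SimpleGraph.mem_edgeSet] at this
  -- parity
  have hpar : ∀ a b : V, G.Adj a b → (Even (G.dist v a) ↔ ¬ Even (G.dist v b)) := by
    intro a b hab
    rcases tree_dist_adj hT (v := v) hab with h | h <;>
      · simp only [Nat.even_iff] at *; omega
  set I₁ : Set V := {u | Even (G.dist v u)} with hI₁def
  set I₂ : Set V := {u | ¬ Even (G.dist v u)} with hI₂def
  have hind : ∀ I : Set V, (I = I₁ ∨ I = I₂) → _root_.IsIndepSet G I := by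
    rintro I (rfl | rfl) <;>
    · intro a ha b hb hne hadj
      have := hpar a b hadj
      simp only [hI₁def, hI₂def, Set.mem_setOf_eq] at ha hb
      tauto
  have hinj : ∀ I : Set V, _root_.IsIndepSet G I → Set.InjOn fe I := by
    intro I hI a ha b hb hfab
    by_contra hne
    have hb' : b ∈ fe a := hfab ▸ hfe2 b
    exact hI ha hb hne (hadjM (fe a) (hfe1 a) a b (hfe2 a) hb' hne)
  have hle : ∀ I : Set V, _root_.IsIndepSet G I → I.ncard ≤ M.ncard := by
    intro I hI
    exact Set.ncard_le_ncard_of_injOn fe (fun a _ => hfe1 a) (hinj I hI) M.toFinite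
  have himg : ∀ I : Set V, (I = I₁ ∨ I = I₂) → fe '' I = M := by
    intro I hI
    apply Set.Subset.antisymm
    · rintro e ⟨a, _, rfl⟩; exact hfe1 a
    · intro e he
      obtain ⟨⟨x, y⟩, rfl⟩ := Quot.exists_rep e
      change s(x,y) ∈ M at he
      show s(x,y) ∈ fe '' _
      have hxy : G.Adj x y := by
        have := hMG.1 he; rwa [SimpleGraph.mem_edgeSet] at this
      have hp := hpar x y hxy
      have hx : fe x = s(x, y) := huniq x _ he (by simp)
      have hy : fe y = s(x, y) := huniq y _ he (by simp)
      rcases hI with rfl | rfl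
      · by_cases hev : Even (G.dist v x)
        · exact ⟨x, hev, hx⟩
        · refine ⟨y, show Even (G.dist v y) from ?_, hy⟩; by_contra h2; exact hev (hp.mpr h2)
      · by_cases hev : Even (G.dist v x)
        · exact ⟨y, hp.mp hev, hy⟩
        · exact ⟨x, hev, hx⟩
  have hcard : ∀ I : Set V, (I = I₁ ∨ I = I₂) → I.ncard = M.ncard := by
    intro I hI
    rw [← himg I hI, Set.ncard_image_of_injOn (hinj I (hind I hI))]
  have hbdd : BddAbove {n | ∃ I : Set V, _root_.IsIndepSet G I ∧ I.ncard = n} := by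
    exact ⟨M.ncard, fun n ⟨I, hI, hIn⟩ => hIn ▸ hle I hI⟩
  have hmem : M.ncard ∈ {n | ∃ I : Set V, _root_.IsIndepSet G I ∧ I.ncard = n} :=
    ⟨I₁, hind I₁ (Or.inl rfl), hcard I₁ (Or.inl rfl)⟩
  have hnum : _root_.indepNum G = M.ncard := by
    apply le_antisymm
    · exact csSup_le ⟨M.ncard, hmem⟩ (fun n ⟨I, hI, hIn⟩ => hIn ▸ hle I hI)
    · exact le_csSup hbdd hmem
  refine ⟨I₁, I₂, ⟨hind I₁ (Or.inl rfl), by rw [hcard I₁ (Or.inl rfl), hnum]⟩,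
    ⟨hind I₂ (Or.inr rfl), by rw [hcard I₂ (Or.inr rfl), hnum]⟩, ?_, ?_⟩
  · show Even (G.dist v v)
    simp [SimpleGraph.dist_self]
  · show ¬¬ Even (G.dist v v)
    simp [SimpleGraph.dist_self]
end
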